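/- For every positive integer ℓ, the sum of c(ℓ,k)/2^k over k from 1 to ℓ with k odd equals ((2ℓ)! / (2^{2ℓ+1} ℓ!)) · (2ℓ/(2ℓ-1)). -/

import Mathlib

open Equiv Equiv.Perm Finset

/-- Number of cycles of a permutation, counting fixed points as cycles of length 1. -/
def numCycles {n : ℕ} (σ : Equiv.Perm (Fin n)) : ℕ :=
  Multiset.card σ.cycleType + (n - σ.cycleType.sum)

/-- The unsigned Stirling number of the first kind: the number of permutations of
`ℓ` letters with exactly `k` cycles. -/
noncomputable def stirlingC (ℓ k : ℕ) : ℕ :=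
  Nat.card {σ : Equiv.Perm (Fin ℓ) // numCycles σ = k}

/-- The signed Stirling number of the first kind. -/
noncomputable def stirlingS (ℓ k : ℕ) : ℤ :=
  (-1) ^ (ℓ - k) * stirlingC ℓ k

section CycleLemmas

lemma support_swap_mul_cycle {α : Type*} [Fintype α] [DecidableEq α] {c : Perm α} {a b : α}
    (hca : c a = a) (hb : c b ≠ b) (hab : a ≠ b) :
    (swap a b * c).support = insert a c.support := by
  ext x
  simp only [Perm.mem_support, Finset.mem_insert, Perm.mul_apply]
  constructor
  · intro hx
    by_contra hcon
    push_neg at hcon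
    obtain ⟨hxa, hxc⟩ := hcon
    rw [hxc] at hx
    apply hx
    rw [swap_apply_of_ne_of_ne hxa]
    rintro rfl; exact hb hxc
  · rintro (rfl | hx)
    · rw [hca, swap_apply_left]; exact hab.symm
    · rcases eq_or_ne (c x) b with h | h
      · have hxb : x ≠ b := by rintro rfl; exact hx h
        rw [h, swap_apply_right]
        rintro rfl
        exact (fun h' => hx (by rw [h'])) hca
      · have h' : c x ≠ a := by
          intro h2
          have hx2 : x = a := c.injective (by rw [h2, hca])
          exact hx (by rw [hx2, hca])
        rw [swap_apply_of_ne_of_ne h' h]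
        exact hx

lemma isCycle_swap_mul_cycle {α : Type*} [Fintype α] [DecidableEq α] {c : Perm α}
    (hc : c.IsCycle) {a b : α} (hca : c a = a) (hb : c b ≠ b) (hab : a ≠ b) :
    (swap a b * c).IsCycle := by
  set d := swap a b * c with hd
  have hda : d a = b := by rw [hd, Perm.mul_apply, hca, swap_apply_left]
  have key : ∀ k : ℕ, d.SameCycle a ((c ^ k) b) := by
    intro k
    induction k with
    | zero => exact ⟨1, by simpa using hda⟩
    | succ k ih =>
      have hyk : c ((c ^ k) b) ≠ (c ^ k) b := by
        have : (c ^ k) b ∈ c.support := by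
          apply Perm.pow_apply_mem_support.mpr
          exact Perm.mem_support.mpr hb
        exact Perm.mem_support.mp this
      have hpow : (c ^ (k+1)) b = c ((c ^ k) b) := by
        rw [pow_succ', Perm.mul_apply]
      rcases eq_or_ne (c ((c ^ k) b)) b with h | h
      · rw [hpow, h]
        exact ⟨1, by simpa using hda⟩
      · have hca' : c ((c ^ k) b) ≠ a := by
          intro h'
          have := c.injective (h'.trans hca.symm)
          rw [this] at hyk
          exact hyk hca
        have hstep : d ((c ^ k) b) = (c ^ (k+1)) b := by
          rw [hd, Perm.mul_apply, swap_apply_of_ne_of_ne hca' h, hpow]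
        exact ih.trans ⟨1, by simpa using hstep⟩
  refine ⟨a, ?_, ?_⟩
  · rw [hda]; exact hab.symm
  · intro y hy
    have hy' : y ∈ (swap a b * c).support := Perm.mem_support.mpr hy
    rw [support_swap_mul_cycle hca hb hab, Finset.mem_insert] at hy'
    rcases hy' with rfl | hy'
    · exact SameCycle.refl _ _
    · obtain ⟨k, hk⟩ := hc.exists_pow_eq hb (Perm.mem_support.mp hy')
      rw [← hk]
      exact key k

lemma nc_swap_mul {α : Type*} [Fintype α] [DecidableEq α] {f : Perm α} {a b : α}
    (ha : f a = a) (hab : a ≠ b) :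
    Multiset.card (swap a b * f).cycleType + (Fintype.card α - (swap a b * f).support.card) + 1
      = Multiset.card f.cycleType + (Fintype.card α - f.support.card) := by
  have hbound : (swap a b * f).support.card ≤ Fintype.card α := (swap a b * f).support.card_le_univ
  have hasupp : a ∉ f.support := by simp [Perm.mem_support, ha]
  by_cases hb : f b = b
  · have hdis : Perm.Disjoint (swap a b) f := by
      intro x
      by_cases hxa : x = a
      · subst hxa; right; exact ha
      by_cases hxb : x = b
      · subst hxb; right; exact hb
      · left; exact swap_apply_of_ne_of_ne hxa hxb
    have hct : (swap a b * f).cycleType = {2} + f.cycleType := by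
      rw [hdis.cycleType_mul, (isCycle_swap hab).cycleType, card_support_swap hab]
    have hsupp : (swap a b * f).support.card = 2 + f.support.card := by
      rw [hdis.card_support_mul, card_support_swap hab]
    rw [hsupp] at hbound
    rw [hct, hsupp]
    simp only [Multiset.card_add, Multiset.card_singleton]
    omega
  · set c := f.cycleOf b with hcdef
    have hc : c.IsCycle := isCycle_cycleOf f hb
    have hmem : c ∈ f.cycleFactorsFinset :=
      cycleOf_mem_cycleFactorsFinset_iff.mpr (Perm.mem_support.mpr hb)
    set g := f * c⁻¹ with hgdef
    have hdis : Perm.Disjoint g c := disjoint_mul_inv_of_mem_cycleFactorsFinset hmem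
    have hfc : g * c = f := by rw [hgdef]; group
    have hcsupp : c.support ⊆ f.support := support_cycleOf_le f b
    have hca : c a = a := by
      by_contra h
      exact hasupp (hcsupp (Perm.mem_support.mpr h))
    have hcb : c b ≠ b := by
      have : b ∈ c.support :=
        mem_support_cycleOf_iff.mpr ⟨SameCycle.refl _ _, Perm.mem_support.mpr hb⟩
      exact Perm.mem_support.mp this
    have hcainv : c⁻¹ a = a := by rw [Perm.inv_eq_iff_eq]; exact hca.symm
    have hag : g a = a := by rw [hgdef, Perm.mul_apply, hcainv, ha]
    have hbg : g b = b := by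
      rcases hdis b with h | h
      · exact h
      · exact absurd h hcb
    have hdswap : Perm.Disjoint (swap a b) g := by
      intro x
      by_cases hxa : x = a
      · subst hxa; right; exact hag
      by_cases hxb : x = b
      · subst hxb; right; exact hbg
      · left; exact swap_apply_of_ne_of_ne hxa hxb
    have hcomm : swap a b * f = g * (swap a b * c) := by
      rw [← hfc, ← mul_assoc, hdswap.commute.eq, mul_assoc]
    have hdis2 : Perm.Disjoint g (swap a b * c) := by
      intro x
      by_cases hgx : g x = x
      · left; exact hgx
      · right
        have hcx : c x = x := (hdis x).resolve_left hgx
        have hxa : x ≠ a := fun h => hgx (by rw [h, hag])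
        have hxb : x ≠ b := fun h => hgx (by rw [h, hbg])
        rw [Perm.mul_apply, hcx, swap_apply_of_ne_of_ne hxa hxb]
    have hcyc2 : (swap a b * c).IsCycle := isCycle_swap_mul_cycle hc hca hcb hab
    have hcard2 : (swap a b * c).support.card = c.support.card + 1 := by
      rw [support_swap_mul_cycle hca hcb hab,
        Finset.card_insert_of_notMem (by simp [Perm.mem_support, hca])]
    have hct2 : (swap a b * f).cycleType = g.cycleType + {c.support.card + 1} := by
      rw [hcomm, hdis2.cycleType_mul, hcyc2.cycleType, hcard2]
    have hctf : f.cycleType = g.cycleType + {c.support.card} := by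
      rw [← hfc, hdis.cycleType_mul, hc.cycleType]
    have hs2 : (swap a b * f).support.card = g.support.card + (c.support.card + 1) := by
      rw [hcomm, hdis2.card_support_mul, hcard2]
    have hsf : f.support.card = g.support.card + c.support.card := by
      rw [← hfc, hdis.card_support_mul]
    rw [hs2] at hbound
    rw [hct2, hs2, hctf, hsf]
    simp only [Multiset.card_add, Multiset.card_singleton]
    omega

end CycleLemmas

section DecomposeFin

lemma numCycles_eq {n : ℕ} (σ : Perm (Fin n)) :
    numCycles σ = Multiset.card σ.cycleType + (Fintype.card (Fin n) - σ.support.card) := by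
  rw [numCycles, sum_cycleType, Fintype.card_fin]

def finNeZeroEquiv (n : ℕ) : Fin n ≃ {x : Fin (n + 1) // x ≠ 0} where
  toFun i := ⟨i.succ, Fin.succ_ne_zero i⟩
  invFun x := (x : Fin (n + 1)).pred x.2
  left_inv i := by simp
  right_inv x := by simp

lemma decomposeFin_zero_eq_extend {n : ℕ} (e : Perm (Fin n)) :
    Equiv.Perm.decomposeFin.symm (0, e) = e.extendDomain (finNeZeroEquiv n) := by
  ext x
  refine Fin.cases ?_ (fun i => ?_) x
  · rw [Equiv.Perm.decomposeFin_symm_apply_zero,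
      Perm.extendDomain_apply_not_subtype _ _ (by simp)]
  · rw [Equiv.Perm.decomposeFin_symm_apply_succ, swap_self]
    have := Perm.extendDomain_apply_subtype e (finNeZeroEquiv n) (Fin.succ_ne_zero i)
    rw [this]
    simp [finNeZeroEquiv]

lemma cycleType_decomposeFin_zero {n : ℕ} (e : Perm (Fin n)) :
    (Equiv.Perm.decomposeFin.symm (0, e)).cycleType = e.cycleType := by
  rw [decomposeFin_zero_eq_extend, cycleType_extendDomain]

lemma numCycles_decomposeFin_zero {n : ℕ} (e : Perm (Fin n)) :
    numCycles (Equiv.Perm.decomposeFin.symm (0, e)) = numCycles e + 1 := by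
  have hsum : e.cycleType.sum ≤ n := by
    rw [sum_cycleType]
    simpa using e.support.card_le_univ
  rw [numCycles, numCycles, cycleType_decomposeFin_zero]
  omega

lemma decomposeFin_symm_eq {n : ℕ} (p : Fin (n + 1)) (e : Perm (Fin n)) :
    Equiv.Perm.decomposeFin.symm (p, e) = swap 0 p * Equiv.Perm.decomposeFin.symm (0, e) := by
  ext x
  refine Fin.cases ?_ (fun i => ?_) x
  · simp [Equiv.Perm.decomposeFin_symm_apply_zero]
  · simp [Equiv.Perm.decomposeFin_symm_apply_succ]

lemma numCycles_decomposeFin {n : ℕ} (p : Fin (n + 1)) (e : Perm (Fin n)) :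
    numCycles (Equiv.Perm.decomposeFin.symm (p, e))
      = if p = 0 then numCycles e + 1 else numCycles e := by
  split_ifs with hp
  · subst hp; exact numCycles_decomposeFin_zero e
  · have h0 : (Equiv.Perm.decomposeFin.symm (0, e)) 0 = 0 :=
      Equiv.Perm.decomposeFin_symm_apply_zero 0 e
    have key := nc_swap_mul (f := Equiv.Perm.decomposeFin.symm (0, e)) (a := 0) (b := p)
      h0 (Ne.symm hp)
    rw [← decomposeFin_symm_eq, ← numCycles_eq, ← numCycles_eq,
      numCycles_decomposeFin_zero] at key
    omega

end DecomposeFin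

section GenFun

lemma sum_pow_numCycles (n : ℕ) (x : ℝ) :
    ∑ σ : Perm (Fin n), x ^ numCycles σ = ∏ i ∈ range n, (x + i) := by
  induction n with
  | zero =>
    rw [range_zero, prod_empty]
    rw [Fintype.sum_eq_single (1 : Perm (Fin 0)) (fun σ h => absurd (Subsingleton.elim σ 1) h)]
    simp [numCycles]
  | succ n ih =>
    rw [prod_range_succ, ← ih]
    rw [← Equiv.sum_comp (Equiv.Perm.decomposeFin.symm) (fun σ => x ^ numCycles σ)]
    rw [Fintype.sum_prod_type, Finset.sum_comm]
    have inner : ∀ e : Perm (Fin n),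
        ∑ p : Fin (n + 1), x ^ numCycles (Equiv.Perm.decomposeFin.symm (p, e))
          = x * x ^ numCycles e + n * x ^ numCycles e := by
      intro e
      have h1 : ∀ p : Fin (n + 1), x ^ numCycles (Equiv.Perm.decomposeFin.symm (p, e))
          = (if p = 0 then x * x ^ numCycles e - x ^ numCycles e else 0) + x ^ numCycles e := by
        intro p
        rw [numCycles_decomposeFin]
        split_ifs <;> ring
      rw [Finset.sum_congr rfl (fun p _ => h1 p), Finset.sum_add_distrib,
        Finset.sum_ite_eq' univ (0 : Fin (n + 1)), Finset.sum_const]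
      simp [Finset.card_univ]
      ring
    rw [Finset.sum_congr rfl (fun e _ => inner e)]
    rw [Finset.sum_add_distrib, ← Finset.mul_sum, ← Finset.mul_sum]
    ring

lemma numCycles_le {n : ℕ} (σ : Perm (Fin n)) : numCycles σ ≤ n := by
  have h1 : Multiset.card σ.cycleType ≤ σ.cycleType.sum := by
    simpa using Multiset.card_nsmul_le_sum (fun a ha => (one_lt_of_mem_cycleType ha).le)
  have h2 : σ.cycleType.sum ≤ n := by
    rw [sum_cycleType]; simpa using σ.support.card_le_univ
  rw [numCycles]; omega

lemma stirlingC_eq (n k : ℕ) :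
    stirlingC n k = ((univ : Finset (Perm (Fin n))).filter (fun σ => numCycles σ = k)).card := by
  rw [stirlingC, Nat.card_eq_fintype_card, Fintype.card_subtype]

lemma sum_stirling (n : ℕ) (x : ℝ) :
    ∑ k ∈ range (n + 1), (stirlingC n k : ℝ) * x ^ k = ∏ i ∈ range n, (x + i) := by
  rw [← sum_pow_numCycles,
    ← Finset.sum_fiberwise_of_maps_to (g := fun σ => numCycles σ)
      (fun σ _ => Finset.mem_range.mpr (Nat.lt_succ_of_le (numCycles_le σ)))]
  refine Finset.sum_congr rfl fun k _ => ?_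
  rw [stirlingC_eq]
  rw [Finset.sum_congr rfl (fun σ hσ => by
    rw [(Finset.mem_filter.mp hσ).2])]
  rw [Finset.sum_const, nsmul_eq_mul]

end GenFun

section Products

lemma prodA (n : ℕ) : ∏ i ∈ range n, ((1:ℝ)/2 + i)
    = (Nat.factorial (2*n)) / (4^n * Nat.factorial n) := by
  induction n with
  | zero => simp
  | succ n ih =>
    rw [prod_range_succ, ih]
    have h1 : 2 * (n+1) = (2*n+1)+1 := by ring
    rw [h1, Nat.factorial_succ, Nat.factorial_succ, Nat.factorial_succ]
    have h2 : (Nat.factorial n : ℝ) ≠ 0 := Nat.cast_ne_zero.mpr (Nat.factorial_ne_zero n)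
    have h3 : (4:ℝ)^n ≠ 0 := by positivity
    push_cast
    field_simp
    ring

lemma prodB (n : ℕ) : ∏ i ∈ range (n+1), (-((1:ℝ)/2) + i)
    = -(1/2) * ∏ i ∈ range n, ((1:ℝ)/2 + i) := by
  rw [prod_range_succ']
  have : ∀ i ∈ range n, (-((1:ℝ)/2) + ((i:ℕ)+1 : ℕ)) = (1:ℝ)/2 + i := by
    intro i _; push_cast; ring
  rw [prod_congr rfl this]
  push_cast
  ring

end Products

theorem stmt_9 (ℓ : ℕ) (hℓ : 0 < ℓ) :
    ∑ k ∈ (Finset.Icc 1 ℓ).filter (fun k => Odd k), (stirlingC ℓ k : ℝ) / 2 ^ k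
      = (Nat.factorial (2 * ℓ)) / (2 ^ (2 * ℓ + 1) * Nat.factorial ℓ) *
          ((2 * (ℓ : ℝ)) / (2 * (ℓ : ℝ) - 1)) := by
  obtain ⟨m, rfl⟩ : ∃ m, ℓ = m + 1 := ⟨ℓ - 1, (Nat.succ_pred_eq_of_pos hℓ).symm⟩
  have hfilter : (Finset.Icc 1 (m+1)).filter (fun k => Odd k)
      = (range (m+2)).filter (fun k => Odd k) := by
    ext k
    simp only [Finset.mem_filter, Finset.mem_Icc, Finset.mem_range, Nat.odd_iff]
    omega
  have hdiv : ∀ k : ℕ, (stirlingC (m+1) k : ℝ) / 2 ^ k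
      = (stirlingC (m+1) k : ℝ) * ((1:ℝ)/2) ^ k := by
    intro k
    rw [div_pow, one_pow, mul_one_div]
  rw [hfilter]
  rw [Finset.sum_congr rfl (fun k _ => hdiv k)]
  have hsplit : ∑ k ∈ (range (m+2)).filter (fun k => Odd k),
        (stirlingC (m+1) k : ℝ) * ((1:ℝ)/2) ^ k
      = ((∑ k ∈ range (m+2), (stirlingC (m+1) k : ℝ) * ((1:ℝ)/2) ^ k)
        - (∑ k ∈ range (m+2), (stirlingC (m+1) k : ℝ) * (-((1:ℝ)/2)) ^ k)) / 2 := by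
    rw [← Finset.sum_sub_distrib, Finset.sum_div, Finset.sum_filter]
    refine Finset.sum_congr rfl fun k _ => ?_
    rcases Nat.even_or_odd k with h | h
    · rw [if_neg (by simpa using h), h.neg_pow]
      ring
    · rw [if_pos h, h.neg_pow]
      ring
  rw [hsplit, sum_stirling (m+1) ((1:ℝ)/2), sum_stirling (m+1) (-((1:ℝ)/2)),
    prod_range_succ, prodB, prodA]
  have h1 : 2 * (m+1) = (2*m+1)+1 := by ring
  rw [h1, Nat.factorial_succ, Nat.factorial_succ, Nat.factorial_succ]
  have h2 : (Nat.factorial m : ℝ) ≠ 0 := Nat.cast_ne_zero.mpr (Nat.factorial_ne_zero m)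
  have h3 : (4:ℝ)^m ≠ 0 := by positivity
  have h4 : 2 * ((m:ℝ) + 1) - 1 ≠ 0 := by
    have : 2 * ((m:ℝ) + 1) - 1 = 2 * m + 1 := by ring
    rw [this]; positivity
  have h5 : (2:ℝ) ^ (2 * m + 1 + 1 + 1) = 8 * 4 ^ m := by
    rw [pow_succ, pow_succ, pow_succ]
    rw [show (2:ℝ)^(2*m) = 4^m by rw [pow_mul]; norm_num]
    ring
  push_cast
  push_cast at h5
  rw [h5]
  field_simp
  ring
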